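/- For every element x of Q: x^{c d c̄ d̄} = x; equivalently, the point symmetries S_c and S_d commute on Q. -/
import Mathlib


/-- A quandle as in the paper: a set with operations `▷` and `▷⁻¹` satisfying
axioms A1, A2, A3. -/
class PaperQuandle (Q : Type*) where
  rhd : Q → Q → Q
  rhdInv : Q → Q → Q
  fix : ∀ x : Q, rhd x x = x
  inv_rhd : ∀ x y : Q, rhdInv (rhd x y) y = x
  rhd_inv : ∀ x y : Q, rhd (rhdInv x y) y = x
  self_distrib : ∀ x y z : Q, rhd (rhd x y) z = rhd (rhd x z) (rhd y z)

infixl:65 " ▷ " => PaperQuandle.rhd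
infixl:65 " ▷⁻¹ " => PaperQuandle.rhdInv

/-- The point symmetry at `u`, as a permutation of `Q`: `x ↦ x ▷ u`,
with inverse `x ↦ x ▷⁻¹ u`. -/
def ptSym {Q : Type*} [PaperQuandle Q] (u : Q) : Equiv.Perm Q where
  toFun x := x ▷ u
  invFun x := x ▷⁻¹ u
  left_inv x := PaperQuandle.inv_rhd x u
  right_inv x := PaperQuandle.rhd_inv x u


section GroupLemma
variable {G : Type*} [Group G]

lemma conj_zpow_of {h g : G} (hh : h * g * h⁻¹ = g⁻¹) (j : ℤ) :
    h * g ^ j * h⁻¹ = g ^ (-j) := by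
  have hmap := map_zpow (MulAut.conj h) g j
  simp only [MulAut.conj_apply] at hmap
  rw [hmap, hh, inv_zpow, zpow_neg]

lemma key_comm (k : ℤ) (A B C D E F : G)
    (hA : A * A = 1) (hB : B * B = 1) (hE : E * E = 1) (hF : F * F = 1)
    (h1 : A * E * D = 1) (h2 : F * D * B = 1)
    (h3 : E * A * (B * A) ^ k * C = 1)
    (h4 : A * (B * A) ^ (k - 1) * C * F = 1) :
    C * D = D * C := by
  have iA : A⁻¹ = A := inv_eq_of_mul_eq_one_right hA
  have iB : B⁻¹ = B := inv_eq_of_mul_eq_one_right hB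
  have iE : E⁻¹ = E := inv_eq_of_mul_eq_one_right hE
  have iF : F⁻¹ = F := inv_eq_of_mul_eq_one_right hF
  set g : G := B * A with hg
  have hD : D = E * A := by
    have h := inv_eq_of_mul_eq_one_right h1
    rw [mul_inv_rev, iA, iE] at h
    exact h.symm
  have hFval : F = B * A * E := by
    have h : F * (D * B) = 1 := by rw [← mul_assoc]; exact h2
    have h' := inv_eq_of_mul_eq_one_left h
    rw [mul_inv_rev, hD, mul_inv_rev, iA, iB, iE] at h'
    rw [← h', mul_assoc]
  have hEconj : E * g * E⁻¹ = g⁻¹ := by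
    have h := hF
    rw [hFval] at h
    have hthis : g * E * (g * E) = 1 := by rw [hg]; exact h
    rw [mul_assoc] at hthis
    have h5 := inv_eq_of_mul_eq_one_right hthis
    rw [iE, mul_assoc]
    exact h5.symm
  have hAconj : A * g * A⁻¹ = g⁻¹ := by
    rw [hg, iA, mul_inv_rev, iA, iB]
    calc A * (B * A) * A = A * B * (A * A) := by group
      _ = A * B := by rw [hA, mul_one]
  have hC : C = g ^ (-k) * A * E := by
    have h := inv_eq_of_mul_eq_one_left h3
    have h' := congrArg (·⁻¹) h
    simp only [inv_inv, mul_inv_rev, iA, iE, ← zpow_neg] at h'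
    rw [h']; group
  have hCD : C * D = g ^ (-k) := by
    rw [hC, hD]
    calc g ^ (-k) * A * E * (E * A) = g ^ (-k) * A * (E * E) * A := by group
      _ = g ^ (-k) * (A * A) := by rw [hE]; group
      _ = g ^ (-k) := by rw [hA, mul_one]
  have hAg : A * g ^ (-k) * A = g ^ k := by
    have := conj_zpow_of hAconj (-k)
    rw [iA, neg_neg] at this
    exact this
  have hEg : E * g ^ k * E = g ^ (-k) := by
    have := conj_zpow_of hEconj k
    rwa [iE] at this
  have hDC : D * C = g ^ (-k) := by
    rw [hC, hD]
    calc E * A * (g ^ (-k) * A * E) = E * (A * g ^ (-k) * A) * E := by group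
      _ = E * g ^ k * E := by rw [hAg]
      _ = g ^ (-k) := hEg
  rw [hCD, hDC]

end GroupLemma

theorem stmt_7
    {Q : Type*} [PaperQuandle Q] (k : ℤ) (m n : ℕ) (a b c d e f : Q)
    (hk : 1 ≤ k) (hm : 0 < m) (hn : 0 < n)
    (rel_a : ∀ x : Q, x ▷ a ▷ a = x)
    (rel_b : ∀ x : Q, x ▷ b ▷ b = x)
    (rel_e : ∀ x : Q, x ▷ e ▷ e = x)
    (rel_f : ∀ x : Q, x ▷ f ▷ f = x)
    (rel_c : ∀ x : Q, (ptSym c ^ m) x = x)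
    (rel_d : ∀ x : Q, (ptSym d ^ n) x = x)
    (rel_dea : ∀ x : Q, x ▷ d ▷ e ▷ a = x)
    (rel_bdf : ∀ x : Q, x ▷ b ▷ d ▷ f = x)
    (rel_cke : ∀ x : Q, (((ptSym b * ptSym a) ^ k) (x ▷ c)) ▷ a ▷ e = x)
    (rel_fca : ∀ x : Q, (((ptSym b * ptSym a) ^ (k - 1)) (x ▷ f ▷ c)) ▷ a = x) :
    (∀ x : Q, x ▷ c ▷ d ▷⁻¹ c ▷⁻¹ d = x) ∧
    ptSym c * ptSym d = ptSym d * ptSym c := by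
  have hA : ptSym a * ptSym a = 1 := Equiv.ext rel_a
  have hB : ptSym b * ptSym b = 1 := Equiv.ext rel_b
  have hE : ptSym e * ptSym e = 1 := Equiv.ext rel_e
  have hF : ptSym f * ptSym f = 1 := Equiv.ext rel_f
  have h1 : ptSym a * ptSym e * ptSym d = 1 := Equiv.ext rel_dea
  have h2 : ptSym f * ptSym d * ptSym b = 1 := Equiv.ext rel_bdf
  have h3 : ptSym e * ptSym a * (ptSym b * ptSym a) ^ k * ptSym c = 1 := Equiv.ext rel_cke
  have h4 : ptSym a * (ptSym b * ptSym a) ^ (k - 1) * ptSym c * ptSym f = 1 := Equiv.ext rel_fca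
  have hcomm : ptSym c * ptSym d = ptSym d * ptSym c :=
    key_comm k (ptSym a) (ptSym b) (ptSym c) (ptSym d) (ptSym e) (ptSym f)
      hA hB hE hF h1 h2 h3 h4
  refine ⟨fun x => ?_, hcomm⟩
  have hx : ((ptSym d)⁻¹ * (ptSym c)⁻¹ * ptSym d * ptSym c) x = x := by
    have : (ptSym d)⁻¹ * (ptSym c)⁻¹ * ptSym d * ptSym c = 1 := by
      rw [mul_assoc, mul_assoc, ← hcomm, ← mul_assoc]
      group
    rw [this]; rfl
  exact hx
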